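/- Let F be L-smooth, G convex on closed convex K, and suppose f̃ satisfies ∇₁f̃(x;x) = ∇f(x), f̃(·;x) is μ̃-strongly convex, and ∇₁f̃(·;x) is l̃-Lipschitz, with ∇f being l-Lipschitz. Let x ∈ K, y ∈ ℝⁿ, and x̃ = argmin_{w∈K}[f̃(w;x) + (y − ∇f(x))ᵀ(w−x) + G(w)]. Then the proximal residual satisfies ‖x − prox_G(x − ∇F(x))‖² ≤ 4(1 + (l + l̃)²)‖x̃ − x‖² + 5‖y − ∇F(x)‖², where prox_G(z) = argmin_{w∈K}[G(w) + ½‖w − z‖²]. -/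

import Mathlib

open scoped RealInnerProductSpace
open Filter Set Topology

/-- Variational inequality for a minimizer of `φ + G` over a convex set, where `φ` is
differentiable at the minimizer and `G` is convex. -/
lemma vi_aux {E : Type*} [NormedAddCommGroup E] [InnerProductSpace ℝ E]
    {K : Set E} (hKconv : Convex ℝ K)
    {G φ : E → ℝ} (hG : ConvexOn ℝ K G)
    {Γ : E →L[ℝ] ℝ} {xt : E} (hxt : xt ∈ K)
    (hφ : HasFDerivAt φ Γ xt)
    (hmin : ∀ w ∈ K, φ xt + G xt ≤ φ w + G w)
    {w : E} (hw : w ∈ K) : 0 ≤ Γ (w - xt) + G w - G xt := by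
  set v := w - xt with hv
  have hγ : HasDerivAt (fun t : ℝ => xt + t • v) v 0 := by
    simpa using ((hasDerivAt_id (0 : ℝ)).smul_const v).const_add xt
  have hψ : HasDerivAt (fun t : ℝ => φ (xt + t • v)) (Γ v) 0 := by
    have h0 : HasFDerivAt φ Γ (xt + (0 : ℝ) • v) := by simpa using hφ
    exact h0.comp_hasDerivAt 0 hγ
  have hslope : Tendsto (slope (fun t : ℝ => φ (xt + t • v)) 0) (𝓝[>] 0) (𝓝 (Γ v)) :=
    (hasDerivAt_iff_tendsto_slope.mp hψ).mono_left
      (nhdsWithin_mono _ fun y hy => Set.mem_compl_singleton_iff.2 (ne_of_gt hy))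
  have key : ∀ t ∈ Set.Ioc (0 : ℝ) 1,
      G xt - G w ≤ slope (fun t : ℝ => φ (xt + t • v)) 0 t := by
    intro t ht
    have ht0 : (0 : ℝ) < t := ht.1
    have hcomb : xt + t • v = (1 - t) • xt + t • w := by
      rw [hv]; module
    have hw_t : xt + t • v ∈ K := by
      rw [hcomb]
      exact hKconv hxt hw (by linarith [ht.2]) (le_of_lt ht0) (by ring)
    have hGt : G (xt + t • v) ≤ (1 - t) * G xt + t * G w := by
      rw [hcomb]
      exact hG.2 hxt hw (by linarith [ht.2]) (le_of_lt ht0) (by ring)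
    have hm := hmin _ hw_t
    have hsl : slope (fun t : ℝ => φ (xt + t • v)) 0 t
        = (φ (xt + t • v) - φ (xt + (0 : ℝ) • v)) / t := by
      rw [slope_def_field, sub_zero]
    rw [hsl]
    rw [le_div_iff₀ ht0]
    have h00 : φ (xt + (0 : ℝ) • v) = φ xt := by simp
    rw [h00]
    nlinarith [hm, hGt]
  have hlim : G xt - G w ≤ Γ v :=
    ge_of_tendsto hslope
      (Filter.eventually_of_mem (Ioc_mem_nhdsGT_of_mem ⟨le_refl (0 : ℝ), zero_lt_one⟩) key)
  have : Γ (w - xt) = Γ v := by rw [hv]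
  linarith [hlim, this.ge]

set_option maxHeartbeats 1000000 in
/-- bound on the proximal-gradient residual
`‖x - prox_G(x - ∇F(x))‖²` in terms of the SCA step length `‖x̃ - x‖²` and the
gradient-tracking error `‖y - ∇F(x)‖²`.  The point `p` is the prox point
`prox_G(x - ∇F(x))`, characterized as the minimizer of
`w ↦ G w + ½‖w - (x - ∇F x)‖²` over `K`, and `xt` is the minimizer of the SCA
subproblem. -/
theorem stmt_2 {n : ℕ}
    (K : Set (EuclideanSpace ℝ (Fin n))) (hKne : K.Nonempty) (hKcl : IsClosed K)
    (hKconv : Convex ℝ K)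
    (G : EuclideanSpace ℝ (Fin n) → ℝ) (hG : ConvexOn ℝ K G)
    (f F : EuclideanSpace ℝ (Fin n) → ℝ)
    (fgrad Fgrad : EuclideanSpace ℝ (Fin n) → EuclideanSpace ℝ (Fin n))
    (l lt L μ : ℝ) (hμ : 1 ≤ μ)
    (hf : ∀ z ∈ K, HasGradientAt f (fgrad z) z)
    (hF : ∀ z ∈ K, HasGradientAt F (Fgrad z) z)
    (hflip : ∀ z w, ‖fgrad z - fgrad w‖ ≤ l * ‖z - w‖)
    (hFlip : ∀ z w, ‖Fgrad z - Fgrad w‖ ≤ L * ‖z - w‖)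
    (ft : EuclideanSpace ℝ (Fin n) → EuclideanSpace ℝ (Fin n) → ℝ)
    (ftgrad : EuclideanSpace ℝ (Fin n) → EuclideanSpace ℝ (Fin n) →
      EuclideanSpace ℝ (Fin n))
    (hstrong : ∀ z ∈ K, StrongConvexOn K μ (fun w => ft w z))
    (hftgrad : ∀ z ∈ K, ∀ w, HasGradientAt (fun w' => ft w' z) (ftgrad w z) w)
    (hconsistent : ∀ z ∈ K, ftgrad z z = fgrad z)
    (hftlip : ∀ z w w', ‖ftgrad w z - ftgrad w' z‖ ≤ lt * ‖w - w'‖)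
    (x : EuclideanSpace ℝ (Fin n)) (hx : x ∈ K)
    (y : EuclideanSpace ℝ (Fin n))
    (xt : EuclideanSpace ℝ (Fin n)) (hxt : xt ∈ K)
    (hmin : ∀ w ∈ K,
      ft xt x + ⟪y - fgrad x, xt - x⟫ + G xt ≤
        ft w x + ⟪y - fgrad x, w - x⟫ + G w)
    (p : EuclideanSpace ℝ (Fin n)) (hp : p ∈ K)
    (hprox : ∀ w ∈ K,
      G p + ‖p - (x - Fgrad x)‖ ^ 2 / 2 ≤ G w + ‖w - (x - Fgrad x)‖ ^ 2 / 2) :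
    ‖x - p‖ ^ 2 ≤ 4 * (1 + (l + lt) ^ 2) * ‖xt - x‖ ^ 2
      + 5 * ‖y - Fgrad x‖ ^ 2 := by
  classical
  have hcons := hconsistent x hx
  -- VI for the surrogate subproblem at xt, tested at p
  have h1 : HasFDerivAt (fun w => ft w x)
      (InnerProductSpace.toDual ℝ _ (ftgrad xt x)) xt :=
    (hftgrad x hx xt).hasFDerivAt
  have h2 : HasFDerivAt (fun w : EuclideanSpace ℝ (Fin n) => ⟪y - fgrad x, w - x⟫)
      (innerSL ℝ (y - fgrad x)) xt := by
    have h : HasFDerivAt (fun w : EuclideanSpace ℝ (Fin n) => ⟪y - fgrad x, w⟫)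
        (innerSL ℝ (y - fgrad x)) xt := by
      simpa only [coe_innerSL_apply] using (innerSL ℝ (y - fgrad x)).hasFDerivAt (x := xt)
    have heq : (fun w : EuclideanSpace ℝ (Fin n) => ⟪y - fgrad x, w - x⟫)
        = fun w : EuclideanSpace ℝ (Fin n) => ⟪y - fgrad x, w⟫ - ⟪y - fgrad x, x⟫ := by
      funext w
      exact inner_sub_right _ _ _
    rw [heq]
    exact h.sub_const _
  have hφ1 := h1.add h2
  have V1 : 0 ≤ ⟪ftgrad xt x, p - xt⟫ + ⟪y - fgrad x, p - xt⟫ + G p - G xt := by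
    have h := vi_aux hKconv hG hxt hφ1 hmin hp
    simp only [ContinuousLinearMap.add_apply, InnerProductSpace.toDual_apply_apply,
      innerSL_apply_apply] at h
    linarith
  -- VI for the prox problem at p, tested at xt
  have hG2 : ConvexOn ℝ K (fun w => 2 * G w) := by
    simpa [smul_eq_mul] using hG.smul (by norm_num : (0 : ℝ) ≤ 2)
  have hid : HasFDerivAt (fun w : EuclideanSpace ℝ (Fin n) => w - (x - Fgrad x))
      (ContinuousLinearMap.id ℝ _) p := (hasFDerivAt_id p).sub_const _
  have hφ2 : HasFDerivAt (fun w : EuclideanSpace ℝ (Fin n) => ‖w - (x - Fgrad x)‖ ^ 2)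
      (2 • ((innerSL ℝ (p - (x - Fgrad x))).comp (ContinuousLinearMap.id ℝ _))) p :=
    hid.norm_sq
  have hmin2 : ∀ w ∈ K, ‖p - (x - Fgrad x)‖ ^ 2 + 2 * G p ≤
      ‖w - (x - Fgrad x)‖ ^ 2 + 2 * G w := by
    intro w hw
    have := hprox w hw
    linarith
  have V2 : 0 ≤ ⟪p - (x - Fgrad x), xt - p⟫ + G xt - G p := by
    have h := vi_aux hKconv hG2 hp hφ2 hmin2 hxt
    simp only [ContinuousLinearMap.smul_apply, ContinuousLinearMap.coe_comp',
      ContinuousLinearMap.coe_id', Function.comp_apply, id_eq, innerSL_apply_apply,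
      smul_eq_mul, nsmul_eq_mul, Nat.cast_ofNat] at h
    linarith
  -- combine the two VIs into a single inner-product inequality
  have hneg : ⟪p - (x - Fgrad x), xt - p⟫ = -⟪p - (x - Fgrad x), p - xt⟫ := by
    rw [← neg_sub p xt, inner_neg_right]
  have hvec : ftgrad xt x - ftgrad x x + (y - Fgrad x) + (x - p)
      = ftgrad xt x + (y - fgrad x) - (p - (x - Fgrad x)) := by
    rw [hcons]; abel
  have hvec2 : (x - xt) - (x - p) = p - xt := by abel
  have hkey : 0 ≤ ⟪ftgrad xt x - ftgrad x x + (y - Fgrad x) + (x - p),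
      (x - xt) - (x - p)⟫ := by
    rw [hvec, hvec2, inner_sub_left, inner_add_left]
    rw [hneg] at V2
    linarith
  -- norms and inner products
  have hexp : ⟪ftgrad xt x - ftgrad x x + (y - Fgrad x) + (x - p), (x - xt) - (x - p)⟫
      = ⟪ftgrad xt x - ftgrad x x + (y - Fgrad x), (x - xt) - (x - p)⟫
        + ⟪x - p, x - xt⟫ - ‖x - p‖ ^ 2 := by
    rw [inner_add_left, inner_sub_right (𝕜 := ℝ) (x - p), real_inner_self_eq_norm_sq]
    ring
  have hq : ‖(x - xt) - (x - p)‖ ^ 2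
      = ‖x - xt‖ ^ 2 - 2 * ⟪x - xt, x - p⟫ + ‖x - p‖ ^ 2 :=
    norm_sub_sq_real _ _
  have hsd : ⟪x - xt, x - p⟫ = ⟪x - p, x - xt⟫ := real_inner_comm _ _
  have hCS : ⟪ftgrad xt x - ftgrad x x + (y - Fgrad x), (x - xt) - (x - p)⟫
      ≤ ‖ftgrad xt x - ftgrad x x + (y - Fgrad x)‖ * ‖(x - xt) - (x - p)‖ :=
    real_inner_le_norm _ _
  have hEnorm : ‖ftgrad xt x - ftgrad x x + (y - Fgrad x)‖
      ≤ lt * ‖xt - x‖ + ‖y - Fgrad x‖ :=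
    (norm_add_le _ _).trans (add_le_add_left (hftlip x xt x) _)
  have hP : 0 ≤ lt * ‖xt - x‖ := le_trans (norm_nonneg _) (hftlip x xt x)
  have hR : 0 ≤ l * ‖xt - x‖ := by
    have h1 := hflip xt x
    have h2 := norm_nonneg (fgrad xt - fgrad x)
    linarith
  have hsnorm : ‖x - xt‖ = ‖xt - x‖ := norm_sub_rev _ _
  have hQ0 : (0 : ℝ) ≤ ‖(x - xt) - (x - p)‖ := norm_nonneg _
  have hstep3 : ‖ftgrad xt x - ftgrad x x + (y - Fgrad x)‖ * ‖(x - xt) - (x - p)‖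
      ≤ (lt * ‖xt - x‖ + ‖y - Fgrad x‖) * ‖(x - xt) - (x - p)‖ :=
    mul_le_mul_of_nonneg_right hEnorm hQ0
  have hstep1 : ‖x - p‖ ^ 2 ≤ ⟪x - p, x - xt⟫
      + (lt * ‖xt - x‖ + ‖y - Fgrad x‖) * ‖(x - xt) - (x - p)‖ := by
    rw [hexp] at hkey
    linarith
  have hstep2 : 2 * ⟪x - p, x - xt⟫
      = ‖xt - x‖ ^ 2 + ‖x - p‖ ^ 2 - ‖(x - xt) - (x - p)‖ ^ 2 := by
    rw [← hsd, ← hsnorm]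
    linarith [hq]
  have hstep4 : ‖x - p‖ ^ 2 ≤ ‖xt - x‖ ^ 2
      + (lt * ‖xt - x‖ + ‖y - Fgrad x‖) ^ 2 := by
    nlinarith [sq_nonneg (‖(x - xt) - (x - p)‖ - (lt * ‖xt - x‖ + ‖y - Fgrad x‖))]
  nlinarith [hstep4, hP, hR, mul_nonneg hP hR, sq_nonneg (lt * ‖xt - x‖ - ‖y - Fgrad x‖),
    sq_nonneg (l * ‖xt - x‖), sq_nonneg ‖xt - x‖, norm_nonneg (y - Fgrad x),
    norm_nonneg (xt - x)]
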